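/- Let A be the adjacency matrix of the unitary Cayley graph of ℤ/6ℤ (the 6-cycle, with a adjacent to b iff a − b ≡ ±1 mod 6), regarded over ℂ. Then exp(i·(2π/3)·A)·e_0 = −(1/2)·e_0 − i·(√3/2)·e_3; in particular, the unitary Cayley graph of ℤ/6ℤ has quantum fractional revival from vertex 0 to vertex 3 at time t = 2π/3. -/

import Mathlib

open Matrix

/-- The standard basis vector `e_u` in `ℂ^V`. -/
noncomputable def stdVec {V : Type*} (u : V) : V → ℂ :=
  letI := Classical.decEq V
  Pi.single u 1

/-- The transition matrix `H(t) = exp(i t A)` of a graph with adjacency matrix `A`. -/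
noncomputable def transMatrix {V : Type*} [Fintype V] (A : Matrix V V ℂ) (t : ℝ) :
    Matrix V V ℂ :=
  letI := Classical.decEq V
  NormedSpace.exp ((Complex.I * (t : ℂ)) • A)

/-- Quantum fractional revival from `u` to `v` at time `t`. -/
def hasQFR {V : Type*} [Fintype V] (A : Matrix V V ℂ) (u v : V) (t : ℝ) : Prop :=
  u ≠ v ∧ ∃ α β : ℂ, β ≠ 0 ∧
    (transMatrix A t) *ᵥ stdVec u = α • stdVec u + β • stdVec v

/-- The unitary Cayley graph of a commutative ring: distinct `a, b` are adjacent
iff `a - b` is a unit. -/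
def unitaryCayleyGraph (R : Type*) [CommRing R] : SimpleGraph R where
  Adj a b := a ≠ b ∧ IsUnit (a - b)
  symm := by
    constructor
    rintro a b ⟨h1, h2⟩
    refine ⟨h1.symm, ?_⟩
    rw [← neg_sub]
    exact h2.neg
  loopless := ⟨fun a h => h.1 rfl⟩

/-- The adjacency matrix (over `ℂ`) of the unitary Cayley graph of `R`. -/
noncomputable def ucMatrix (R : Type*) [CommRing R] : Matrix R R ℂ :=
  letI := Classical.decEq R
  letI := Classical.decRel (unitaryCayleyGraph R).Adj
  (unitaryCayleyGraph R).adjMatrix ℂ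

/-- The adjacency matrix (over `ℂ`) of a simple graph. -/
noncomputable def adjMat {V : Type*} (G : SimpleGraph V) : Matrix V V ℂ :=
  letI := Classical.decEq V
  letI := Classical.decRel G.Adj
  G.adjMatrix ℂ

/-! ### Auxiliary material: diagonalization of the 6-cycle -/

/-- `w = exp(πi/3)`, a primitive 6-th root of unity. -/
noncomputable def QFR6.w : ℂ := (1 + Real.sqrt 3 * Complex.I) / 2

namespace QFR6

/-- Powers of `w`, in reduced (linear-in-`w`) form. -/
noncomputable def wp : ℕ → ℂ
  | 0 => 1 | 1 => w | 2 => w - 1 | 3 => -1 | 4 => -w | 5 => 1 - w | _ => 0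

/-- The eigenvalues of the 6-cycle, as a function of the index. -/
noncomputable def de : ℕ → ℂ
  | 0 => 2 | 1 => 1 | 2 => -1 | 3 => -2 | 4 => -1 | 5 => 1 | _ => 0

/-- The DFT (eigenvector) matrix. -/
noncomputable def UU : Matrix (ZMod 6) (ZMod 6) ℂ := Matrix.of fun j k => wp (j.val * k.val % 6)

/-- The inverse DFT matrix. -/
noncomputable def UI : Matrix (ZMod 6) (ZMod 6) ℂ :=
  Matrix.of fun j k => wp (5 * (j.val * k.val) % 6) / 6

/-- The eigenvalue vector. -/
noncomputable def dvec : ZMod 6 → ℂ := fun k => de k.val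

lemma zsum (f : ZMod 6 → ℂ) : ∑ x, f x = f 0 + f 1 + f 2 + f 3 + f 4 + f 5 := Fin.sum_univ_six f

lemma v0 : (0 : ZMod 6).val = 0 := by decide
lemma v1 : (1 : ZMod 6).val = 1 := by decide
lemma v2 : (2 : ZMod 6).val = 2 := by decide
lemma v3 : (3 : ZMod 6).val = 3 := by decide
lemma v4 : (4 : ZMod 6).val = 4 := by decide
lemma v5 : (5 : ZMod 6).val = 5 := by decide

lemma hq : w ^ 2 = w - 1 := by
  have hs : ((Real.sqrt 3 : ℝ) : ℂ) ^ 2 = 3 := by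
    rw [← Complex.ofReal_pow, Real.sq_sqrt] <;> norm_num
  unfold w
  linear_combination (Complex.I ^ 2 / 4) * hs + (3 / 4) * Complex.I_sq

set_option maxHeartbeats 2000000 in
lemma hUUI : UU * UI = 1 := by
  ext j k
  rw [Matrix.mul_apply, zsum]
  simp only [UU, UI, Matrix.of_apply, Matrix.one_apply, ← (ZMod.val_injective 6).eq_iff]
  fin_cases j <;> fin_cases k <;>
    simp only [v0, v1, v2, v3, v4, v5] <;>
    simp only [UU, UI, Matrix.of_apply, ZMod.val, Matrix.one_apply, Fin.ext_iff, Fin.val_mk] <;>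
    norm_num [wp] <;>
    first
      | ring1
      | linear_combination hq | linear_combination (-1 : ℂ) * hq
      | linear_combination (1/3 : ℂ) * hq | linear_combination (-1/3 : ℂ) * hq
      | linear_combination (2/3 : ℂ) * hq | linear_combination (-2/3 : ℂ) * hq
      | linear_combination (4/3 : ℂ) * hq | linear_combination (-4/3 : ℂ) * hq
      | linear_combination (5/3 : ℂ) * hq | linear_combination (-5/3 : ℂ) * hq
      | linear_combination (2 : ℂ) * hq | linear_combination (-2 : ℂ) * hq

lemma hiff : ∀ j k : ZMod 6, (j ≠ k ∧ IsUnit (j - k)) ↔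
    ((j.val + 6 - k.val) % 6 = 1 ∨ (k.val + 6 - j.val) % 6 = 1) := by decide

lemma hent (j k : ZMod 6) :
    ucMatrix (ZMod 6) j k =
      if ((j.val + 6 - k.val) % 6 = 1 ∨ (k.val + 6 - j.val) % 6 = 1) then (1 : ℂ) else 0 := by
  letI := Classical.decEq (ZMod 6)
  letI := Classical.decRel (unitaryCayleyGraph (ZMod 6)).Adj
  show (if (unitaryCayleyGraph (ZMod 6)).Adj j k then (1 : ℂ) else 0) = _
  by_cases h : (unitaryCayleyGraph (ZMod 6)).Adj j k
  · rw [if_pos h, if_pos ((hiff j k).mp h)]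
  · rw [if_neg h, if_neg (fun hc => h ((hiff j k).mpr hc))]

set_option maxHeartbeats 2000000 in
lemma hAU : ucMatrix (ZMod 6) * UU = UU * Matrix.diagonal dvec := by
  ext j k
  rw [Matrix.mul_apply, zsum, Matrix.mul_diagonal]
  simp only [hent, UU, Matrix.of_apply, dvec, v0, v1, v2, v3, v4, v5]
  fin_cases j <;> fin_cases k <;>
    simp only [v0, v1, v2, v3, v4, v5, ZMod.val] <;> norm_num [wp, de] <;> ring1

lemma hIsUnit : IsUnit UU := ⟨⟨UU, UI, hUUI, mul_eq_one_comm.mp hUUI⟩, rfl⟩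

lemma hInv : UU⁻¹ = UI := Matrix.inv_eq_right_inv hUUI

lemma hA : ucMatrix (ZMod 6) = UU * Matrix.diagonal dvec * UI := by
  rw [← hAU, Matrix.mul_assoc, hUUI, Matrix.mul_one]

lemma stdVec_eq (u : ZMod 6) : stdVec u = Pi.single u 1 := by
  unfold stdVec; congr!

lemma single_ent (u x : ZMod 6) :
    (Pi.single u 1 : ZMod 6 → ℂ) x = if x.val = u.val then 1 else 0 := by
  rcases eq_or_ne x u with h | h
  · subst h; rw [Pi.single_eq_same, if_pos rfl]
  · rw [Pi.single_eq_of_ne h, if_neg (fun hv => h (ZMod.val_injective 6 hv))]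

lemma transMatrix_eq (A : Matrix (ZMod 6) (ZMod 6) ℂ) (t : ℝ) :
    transMatrix A t = NormedSpace.exp ((Complex.I * (t : ℂ)) • A) := by
  unfold transMatrix; congr!

/-- The diagonal of the transition matrix at `t = 2π/3`, in closed form. -/
noncomputable def ee : ℕ → ℂ
  | 0 => -(1/2 : ℂ) - ((Real.sqrt 3 : ℝ) : ℂ) / 2 * Complex.I
  | 1 => -(1/2 : ℂ) + ((Real.sqrt 3 : ℝ) : ℂ) / 2 * Complex.I
  | 2 => -(1/2 : ℂ) - ((Real.sqrt 3 : ℝ) : ℂ) / 2 * Complex.I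
  | 3 => -(1/2 : ℂ) + ((Real.sqrt 3 : ℝ) : ℂ) / 2 * Complex.I
  | 4 => -(1/2 : ℂ) - ((Real.sqrt 3 : ℝ) : ℂ) / 2 * Complex.I
  | 5 => -(1/2 : ℂ) + ((Real.sqrt 3 : ℝ) : ℂ) / 2 * Complex.I
  | _ => 0

lemma hcos : Real.cos (2 * Real.pi / 3) = -(1/2) := by
  rw [show (2 * Real.pi / 3 : ℝ) = Real.pi - Real.pi / 3 by ring, Real.cos_pi_sub,
    Real.cos_pi_div_three]

lemma hsin : Real.sin (2 * Real.pi / 3) = Real.sqrt 3 / 2 := by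
  rw [show (2 * Real.pi / 3 : ℝ) = Real.pi - Real.pi / 3 by ring, Real.sin_pi_sub,
    Real.sin_pi_div_three]

lemma hcos2 : Real.cos (4 * Real.pi / 3) = -(1/2) := by
  rw [show (4 * Real.pi / 3 : ℝ) = 2 * Real.pi - 2 * Real.pi / 3 by ring, Real.cos_two_pi_sub,
    hcos]

lemma hsin2 : Real.sin (4 * Real.pi / 3) = -(Real.sqrt 3 / 2) := by
  rw [show (4 * Real.pi / 3 : ℝ) = 2 * Real.pi - 2 * Real.pi / 3 by ring, Real.sin_two_pi_sub,
    hsin]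

lemma hdiag :
    (fun k : ZMod 6 => Complex.exp ((Complex.I * ((2 * Real.pi / 3 : ℝ) : ℂ)) * dvec k)) =
      fun k : ZMod 6 => ee k.val := by
  funext k
  fin_cases k <;>
    simp only [dvec, v0, v1, v2, v3, v4, v5, ZMod.val, de, ee]
  · rw [show Complex.I * ((2 * Real.pi / 3 : ℝ) : ℂ) * 2
        = ((4 * Real.pi / 3 : ℝ) : ℂ) * Complex.I by push_cast; ring,
      Complex.exp_mul_I, ← Complex.ofReal_cos, ← Complex.ofReal_sin, hcos2, hsin2]
    push_cast; ring
  · rw [show Complex.I * ((2 * Real.pi / 3 : ℝ) : ℂ) * 1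
        = ((2 * Real.pi / 3 : ℝ) : ℂ) * Complex.I by push_cast; ring,
      Complex.exp_mul_I, ← Complex.ofReal_cos, ← Complex.ofReal_sin, hcos, hsin]
    push_cast; ring
  · rw [show Complex.I * ((2 * Real.pi / 3 : ℝ) : ℂ) * (-1)
        = ((-(2 * Real.pi / 3) : ℝ) : ℂ) * Complex.I by push_cast; ring,
      Complex.exp_mul_I, ← Complex.ofReal_cos, ← Complex.ofReal_sin, Real.cos_neg,
      Real.sin_neg, hcos, hsin]
    push_cast; ring
  · rw [show Complex.I * ((2 * Real.pi / 3 : ℝ) : ℂ) * (-2)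
        = ((-(4 * Real.pi / 3) : ℝ) : ℂ) * Complex.I by push_cast; ring,
      Complex.exp_mul_I, ← Complex.ofReal_cos, ← Complex.ofReal_sin, Real.cos_neg,
      Real.sin_neg, hcos2, hsin2]
    push_cast; ring
  · rw [show Complex.I * ((2 * Real.pi / 3 : ℝ) : ℂ) * (-1)
        = ((-(2 * Real.pi / 3) : ℝ) : ℂ) * Complex.I by push_cast; ring,
      Complex.exp_mul_I, ← Complex.ofReal_cos, ← Complex.ofReal_sin, Real.cos_neg,
      Real.sin_neg, hcos, hsin]
    push_cast; ring
  · rw [show Complex.I * ((2 * Real.pi / 3 : ℝ) : ℂ) * 1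
        = ((2 * Real.pi / 3 : ℝ) : ℂ) * Complex.I by push_cast; ring,
      Complex.exp_mul_I, ← Complex.ofReal_cos, ← Complex.ofReal_sin, hcos, hsin]
    push_cast; ring

lemma hexp :
    transMatrix (ucMatrix (ZMod 6)) (2 * Real.pi / 3) =
      UU * Matrix.diagonal (fun k : ZMod 6 => ee k.val) * UI := by
  rw [transMatrix_eq, hA, ← hInv]
  rw [show (Complex.I * ((2 * Real.pi / 3 : ℝ) : ℂ)) • (UU * Matrix.diagonal dvec * UU⁻¹)
      = UU * Matrix.diagonal ((Complex.I * ((2 * Real.pi / 3 : ℝ) : ℂ)) • dvec) * UU⁻¹ by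
    rw [Matrix.diagonal_smul, Matrix.mul_smul, Matrix.smul_mul]]
  have hfun : NormedSpace.exp ((Complex.I * ((2 * Real.pi / 3 : ℝ) : ℂ)) • dvec) =
      fun k : ZMod 6 => ee k.val := by
    rw [Pi.exp_def]
    funext k
    rw [← Complex.exp_eq_exp_ℂ, Pi.smul_apply, smul_eq_mul]
    exact congrFun hdiag k
  rw [Matrix.exp_conj UU _ hIsUnit, Matrix.exp_diagonal, hfun, hInv]

end QFR6

open QFR6 in
set_option maxHeartbeats 2000000 in
/-- for the unitary Cayley graph of `ℤ/6` (the 6-cycle),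
`H(2π/3) e_0 = -(1/2) e_0 - i (√3/2) e_3`, so QFR occurs from `0` to `3` at `t = 2π/3`. -/
theorem qfr_zmod_six :
    (transMatrix (ucMatrix (ZMod 6)) (2 * Real.pi / 3)) *ᵥ stdVec (0 : ZMod 6) =
        (-(1 / 2 : ℂ)) • stdVec (0 : ZMod 6) -
          (Complex.I * ((Real.sqrt 3 / 2 : ℝ) : ℂ)) • stdVec (3 : ZMod 6) ∧
      hasQFR (ucMatrix (ZMod 6)) (0 : ZMod 6) (3 : ZMod 6) (2 * Real.pi / 3) := by
  have main : (transMatrix (ucMatrix (ZMod 6)) (2 * Real.pi / 3)) *ᵥ stdVec (0 : ZMod 6) =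
      (-(1 / 2 : ℂ)) • stdVec (0 : ZMod 6) -
        (Complex.I * ((Real.sqrt 3 / 2 : ℝ) : ℂ)) • stdVec (3 : ZMod 6) := by
    rw [hexp, ← Matrix.mulVec_mulVec, ← Matrix.mulVec_mulVec, stdVec_eq 0,
      Matrix.mulVec_single]
    rw [show (MulOpposite.op (1 : ℂ) • UI.col 0) = fun _ : ZMod 6 => (1/6 : ℂ) by
      funext m
      show wp (5 * (m.val * (0 : ZMod 6).val) % 6) / 6 * 1 = 1/6
      rw [v0]
      norm_num [wp]]
    rw [show ((Matrix.diagonal fun k : ZMod 6 => ee k.val) *ᵥ fun _ : ZMod 6 => (1/6 : ℂ)) =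
        fun k : ZMod 6 => ee k.val * (1/6) from funext fun k => Matrix.mulVec_diagonal _ _ _]
    funext x
    rw [stdVec_eq 3]
    simp only [Pi.sub_apply, Pi.smul_apply, smul_eq_mul, single_ent, Matrix.mulVec, dotProduct, zsum, UU, Matrix.of_apply]
    fin_cases x <;>
      simp only [Pi.sub_apply, Pi.smul_apply, smul_eq_mul, single_ent,
        v0, v1, v2, v3, v4, v5] <;>
      simp only [Matrix.mulVec, dotProduct, zsum,
        UU, Matrix.of_apply, ZMod.val, v0, v1, v2, v3, v4, v5, Fin.val_mk] <;>
      norm_num [wp, ee, (show (0 : ZMod 6) ≠ 3 by decide), (show (1 : ZMod 6) ≠ 0 by decide), (show (1 : ZMod 6) ≠ 3 by decide), (show (2 : ZMod 6) ≠ 0 by decide), (show (2 : ZMod 6) ≠ 3 by decide), (show (3 : ZMod 6) ≠ 0 by decide), (show (4 : ZMod 6) ≠ 0 by decide), (show (4 : ZMod 6) ≠ 3 by decide), (show (5 : ZMod 6) ≠ 0 by decide), (show (5 : ZMod 6) ≠ 3 by decide)] <;> push_cast <;> ring1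
  refine ⟨main, by decide, -(1/2 : ℂ), -(Complex.I * ((Real.sqrt 3 / 2 : ℝ) : ℂ)), ?_, ?_⟩
  · have h3 : Real.sqrt 3 / 2 ≠ 0 := by positivity
    exact neg_ne_zero.mpr (mul_ne_zero Complex.I_ne_zero (by exact_mod_cast h3))
  · rw [main, sub_eq_add_neg, ← neg_smul]
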